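/- (Equivalence of BV seminorms in dimension one) For every function v : Y → ℂ of bounded variation on an interval Y ⊂ ℝ, one has (1/2) Var_Y v ≤ 𝔳𝔞𝔯_Y v ≤ 3 Var_Y v, where 𝔳𝔞𝔯_Y v = sup_{0<κ<1} (1/κ) ∫_Y Osc(v, B_κ(x)) dLeb(x). -/

import Mathlib

open MeasureTheory Set
open scoped ENNReal

/-- Oscillation of `v` on a set `J`. -/
noncomputable def osc (v : ℝ → ℂ) (J : Set ℝ) : ℝ :=
  sSup {d | ∃ ξ ∈ J, ∃ ξ' ∈ J, d = ‖v ξ - v ξ'‖}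

section helpers
variable {a b : ℝ} {v : ℝ → ℂ}

lemma norm_sub_le_var {s : Set ℝ} (hs : eVariationOn v s ≠ ⊤) {x y : ℝ}
    (hx : x ∈ s) (hy : y ∈ s) : ‖v x - v y‖ ≤ (eVariationOn v s).toReal := by
  have h := eVariationOn.edist_le v hx hy
  have : ‖v x - v y‖ = (edist (v x) (v y)).toReal := by
    rw [edist_dist, ENNReal.toReal_ofReal dist_nonneg, dist_eq_norm]
  rw [this]
  exact ENNReal.toReal_mono hs h

lemma osc_bddAbove (hBV : eVariationOn v (Icc a b) ≠ ⊤) {J : Set ℝ} (hJ : J ⊆ Icc a b) :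
    BddAbove {d | ∃ ξ ∈ J, ∃ ξ' ∈ J, d = ‖v ξ - v ξ'‖} := by
  refine ⟨(eVariationOn v (Icc a b)).toReal, ?_⟩
  rintro d ⟨ξ, hξ, ξ', hξ', rfl⟩
  exact norm_sub_le_var hBV (hJ hξ) (hJ hξ')

lemma osc_nonneg (J : Set ℝ) : 0 ≤ osc v J :=
  Real.sSup_nonneg (by rintro d ⟨ξ, hξ, ξ', hξ', rfl⟩; positivity)

lemma le_osc (hBV : eVariationOn v (Icc a b) ≠ ⊤) {J : Set ℝ} (hJ : J ⊆ Icc a b)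
    {ξ ξ' : ℝ} (hξ : ξ ∈ J) (hξ' : ξ' ∈ J) : ‖v ξ - v ξ'‖ ≤ osc v J :=
  le_csSup (osc_bddAbove hBV hJ) ⟨ξ, hξ, ξ', hξ', rfl⟩

lemma osc_le_var (hBV : eVariationOn v (Icc a b) ≠ ⊤) {J S : Set ℝ}
    (hJS : J ⊆ S) (hS : S ⊆ Icc a b) : osc v J ≤ (eVariationOn v S).toReal := by
  have hSfin : eVariationOn v S ≠ ⊤ := ne_top_of_le_ne_top hBV (eVariationOn.mono v hS)
  refine Real.sSup_le ?_ ENNReal.toReal_nonneg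
  rintro d ⟨ξ, hξ, ξ', hξ', rfl⟩
  exact norm_sub_le_var hSfin (hJS hξ) (hJS hξ')

lemma osc_global_bound (hBV : eVariationOn v (Icc a b) ≠ ⊤) {J : Set ℝ} (hJ : J ⊆ Icc a b) :
    osc v J ≤ (eVariationOn v (Icc a b)).toReal :=
  osc_le_var hBV hJ le_rfl

end helpers

section meas
variable {a b κ : ℝ} {v : ℝ → ℂ}

lemma window_lsc (hBV : eVariationOn v (Icc a b) ≠ ⊤) (hκ : 0 < κ) :
    LowerSemicontinuous (fun x => osc v (Ioo (x - κ) (x + κ) ∩ Icc a b)) := by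
  intro x c hc
  dsimp only at hc
  by_cases hne : {d | ∃ ξ ∈ Ioo (x - κ) (x + κ) ∩ Icc a b,
      ∃ ξ' ∈ Ioo (x - κ) (x + κ) ∩ Icc a b, d = ‖v ξ - v ξ'‖}.Nonempty
  · obtain ⟨d, hd, hcd⟩ := exists_lt_of_lt_csSup hne hc
    obtain ⟨ξ, hξ, ξ', hξ', rfl⟩ := hd
    have hδ : 0 < min (κ - |ξ - x|) (κ - |ξ' - x|) := by
      have h1 : |ξ - x| < κ := abs_sub_lt_iff.2 ⟨by linarith [hξ.1.2], by linarith [hξ.1.1]⟩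
      have h2 : |ξ' - x| < κ := abs_sub_lt_iff.2 ⟨by linarith [hξ'.1.2], by linarith [hξ'.1.1]⟩
      simp only [lt_min_iff]; constructor <;> linarith
    rw [Metric.eventually_nhds_iff]
    refine ⟨_, hδ, fun {y} hy => ?_⟩
    rw [Real.dist_eq] at hy
    have h1 : ξ ∈ Ioo (y - κ) (y + κ) ∩ Icc a b := by
      refine ⟨?_, hξ.2⟩
      have := abs_sub_abs_le_abs_sub (ξ - x) (ξ - y)
      have h3 : |ξ - y| ≤ |ξ - x| + |y - x| := by
        have h := abs_sub_le ξ x y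
        rwa [abs_sub_comm x y] at h
      have h4 : |ξ - y| < κ := by
        have := lt_min_iff.1 hδ; calc |ξ - y| ≤ |ξ - x| + |y - x| := h3
          _ < |ξ - x| + min (κ - |ξ - x|) (κ - |ξ' - x|) := by linarith [hy]
          _ ≤ κ := by have := min_le_left (κ - |ξ - x|) (κ - |ξ' - x|); linarith
      constructor <;> [skip; skip] <;> (rw [abs_sub_lt_iff] at h4; cases' h4 with h4a h4b; linarith)
    have h2 : ξ' ∈ Ioo (y - κ) (y + κ) ∩ Icc a b := by
      refine ⟨?_, hξ'.2⟩
      have h3 : |ξ' - y| ≤ |ξ' - x| + |y - x| := by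
        have h := abs_sub_le ξ' x y
        rwa [abs_sub_comm x y] at h
      have h4 : |ξ' - y| < κ := by
        have := lt_min_iff.1 hδ; calc |ξ' - y| ≤ |ξ' - x| + |y - x| := h3
          _ < |ξ' - x| + min (κ - |ξ - x|) (κ - |ξ' - x|) := by linarith [hy]
          _ ≤ κ := by have := min_le_right (κ - |ξ - x|) (κ - |ξ' - x|); linarith
      constructor <;> [skip; skip] <;> (rw [abs_sub_lt_iff] at h4; cases' h4 with h4a h4b; linarith)
    exact lt_of_lt_of_le hcd (le_osc hBV inter_subset_right h1 h2)
  · have : osc v (Ioo (x - κ) (x + κ) ∩ Icc a b) = 0 := by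
      rw [osc, Set.not_nonempty_iff_eq_empty.1 hne, Real.sSup_empty]
    rw [this] at hc
    exact Filter.Eventually.of_forall fun y => lt_of_lt_of_le hc (osc_nonneg _)

lemma window_integrableOn (hBV : eVariationOn v (Icc a b) ≠ ⊤) (hκ : 0 < κ) (c d : ℝ) :
    IntegrableOn (fun x => osc v (Ioo (x - κ) (x + κ) ∩ Icc a b)) (Icc c d) := by
  refine ⟨((window_lsc hBV hκ).measurable).aestronglyMeasurable, ?_⟩
  apply HasFiniteIntegral.of_bounded (C := (eVariationOn v (Icc a b)).toReal)
  refine Filter.Eventually.of_forall fun x => ?_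
  rw [Real.norm_eq_abs, abs_of_nonneg (osc_nonneg _)]
  exact osc_global_bound hBV inter_subset_right

lemma window_intervalIntegrable (hBV : eVariationOn v (Icc a b) ≠ ⊤) (hκ : 0 < κ) (c d : ℝ) :
    IntervalIntegrable (fun x => osc v (Ioo (x - κ) (x + κ) ∩ Icc a b)) volume c d := by
  rw [intervalIntegrable_iff]
  exact (window_integrableOn hBV hκ (min c d) (max c d)).mono_set Set.Ioc_subset_Icc_self

end meas

section cells
variable {v : ℝ → ℂ}

lemma var_split {c d e : ℝ} (hcd : c ≤ d) (hde : d ≤ e) :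
    eVariationOn v (Icc c d) + eVariationOn v (Icc d e) = eVariationOn v (Icc c e) := by
  have h := eVariationOn.Icc_add_Icc v (s := Icc c e) hcd hde ⟨hcd, hde⟩
  rwa [Set.inter_eq_self_of_subset_right (Icc_subset_Icc le_rfl hde),
    Set.inter_eq_self_of_subset_right (Icc_subset_Icc hcd le_rfl), Set.inter_self] at h

lemma var_cells {p : ℕ → ℝ} (hp : Monotone p) {s t : ℕ} (hst : s ≤ t) :
    eVariationOn v (Icc (p s) (p t))
      = ∑ j ∈ Finset.Ico s t, eVariationOn v (Icc (p j) (p (j + 1))) := by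
  induction t with
  | zero =>
    obtain rfl : s = 0 := Nat.le_zero.1 hst
    simp [Set.Icc_self, eVariationOn.subsingleton v (Set.subsingleton_singleton)]
  | succ t ih =>
    rcases Nat.lt_or_ge s (t + 1) with hlt | hge
    · have hst' : s ≤ t := Nat.lt_succ_iff.1 hlt
      rw [Finset.sum_Ico_succ_top hst', ← ih hst',
        var_split (hp hst') (hp (Nat.le_succ t))]
    · obtain rfl : s = t + 1 := le_antisymm hst hge
      simp [Set.Icc_self, eVariationOn.subsingleton v (Set.subsingleton_singleton)]

end cells
section upper
variable {a b κ : ℝ} {v : ℝ → ℂ}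

lemma upper_bound (hBV : eVariationOn v (Set.Icc a b) ≠ ⊤) (hκ : 0 < κ) :
    (1 / κ) * ∫ x in Set.Icc a b, osc v (Set.Ioo (x - κ) (x + κ) ∩ Set.Icc a b)
      ≤ 3 * (eVariationOn v (Set.Icc a b)).toReal := by
  set M := (eVariationOn v (Set.Icc a b)).toReal with hM
  have hM0 : 0 ≤ M := ENNReal.toReal_nonneg
  by_cases hab : a < b
  swap
  · have hvol : volume (Set.Icc a b) = 0 := by
      rw [Real.volume_Icc]
      exact ENNReal.ofReal_eq_zero.2 (by linarith [not_lt.1 hab])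
    rw [Measure.restrict_eq_zero.2 hvol, integral_zero_measure, mul_zero]
    positivity
  -- setup
  set N : ℕ := max 1 ⌈3 * (b - a) / κ⌉₊ with hNdef
  have hN0 : 0 < N := lt_of_lt_of_le one_pos (le_max_left _ _)
  have hNR : (0:ℝ) < N := Nat.cast_pos.2 hN0
  set h : ℝ := (b - a) / N with hhdef
  have hh0 : 0 < h := div_pos (by linarith) hNR
  have hNceil : 3 * (b - a) / κ ≤ N := le_trans (Nat.le_ceil _) (Nat.cast_le.2 (le_max_right _ _))
  have hh3 : 3 * h ≤ κ := by
    rw [div_le_iff₀ hκ] at hNceil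
    rw [hhdef, ← mul_div_assoc, div_le_iff₀ hNR]
    nlinarith
  set k : ℕ := ⌈κ / h⌉₊ with hkdef
  have hk1 : κ ≤ k * h := by
    have := Nat.le_ceil (κ / h)
    calc κ = κ / h * h := by field_simp
    _ ≤ k * h := by exact mul_le_mul_of_nonneg_right this hh0.le
  have hk2 : (k : ℝ) < κ / h + 1 := Nat.ceil_lt_add_one (by positivity)
  have hkh : h * (2 * k + 1) ≤ 3 * κ := by
    have : h * (2 * k + 1) < h * (2 * (κ / h + 1) + 1) := by
      apply mul_lt_mul_of_pos_left _ hh0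
      push_cast; linarith
    have h2 : h * (2 * (κ / h + 1) + 1) = 2 * κ + 3 * h := by field_simp; ring
    linarith
  set p : ℕ → ℝ := fun i => a + i * h with hpdef
  have hpmono : Monotone p := by
    intro i j hij
    simp only [hpdef, add_le_add_iff_left]
    exact mul_le_mul_of_nonneg_right (Nat.cast_le.2 hij) hh0.le
  have hp0 : p 0 = a := by simp [hpdef]
  have hpN : p N = b := by
    simp only [hpdef, hhdef]
    field_simp
    ring
  have hpa : ∀ i, a ≤ p i := fun i => by
    simp only [hpdef, le_add_iff_nonneg_right]; positivity
  have hpb : ∀ i, i ≤ N → p i ≤ b := fun i hi => hpN ▸ hpmono hi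
  set f : ℝ → ℝ := fun x => osc v (Set.Ioo (x - κ) (x + κ) ∩ Set.Icc a b) with hfdef
  set V : ℕ → ℝ≥0∞ := fun j => eVariationOn v (Set.Icc (p j) (p (j + 1))) with hVdef
  have hVtot : ∑ j ∈ Finset.range N, V j = eVariationOn v (Set.Icc a b) := by
    rw [← Nat.Ico_zero_eq_range, ← var_cells hpmono (Nat.zero_le N), hp0, hpN]
  -- pointwise bound
  have hptwise : ∀ i, i < N → ∀ x ∈ Set.Icc (p i) (p (i + 1)),
      f x ≤ (eVariationOn v (Set.Icc (p (i - k)) (p (min N (i + 1 + k))))).toReal := by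
    intro i hi x hx
    apply osc_le_var hBV
    · rintro y ⟨hy1, hy2⟩
      constructor
      · rcases Nat.lt_or_ge i k with hik | hik
        · have : i - k = 0 := Nat.sub_eq_zero_of_le hik.le
          rw [this, hp0]; exact hy2.1
        · have hcast : ((i - k : ℕ) : ℝ) = (i : ℝ) - k := by
            push_cast [Nat.cast_sub hik]; ring
          have : p (i - k) = p i - k * h := by
            simp only [hpdef, hcast]; ring
          rw [this]
          have : p i - k * h ≤ x - κ := by
            have := hx.1; linarith
          linarith [hy1.1]
      · rcases Nat.lt_or_ge (i + 1 + k) N with hik | hik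
        · have : min N (i + 1 + k) = i + 1 + k := min_eq_right hik.le
          rw [this]
          have : p (i + 1 + k) = p (i + 1) + k * h := by
            simp only [hpdef]; push_cast; ring
          rw [this]
          have hxk : x + κ ≤ p (i + 1) + k * h := by
            have := hx.2; linarith
          linarith [hy1.2]
        · have : min N (i + 1 + k) = N := min_eq_left hik
          rw [this, hpN]; exact hy2.2
    · exact Set.Icc_subset_Icc (hpa _) (hpb _ (min_le_left _ _))
  -- integrability pieces
  have hint : ∀ i, IntervalIntegrable f volume (p i) (p (i + 1)) :=
    fun i => window_intervalIntegrable hBV hκ _ _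
  -- integral splits
  have hsplit : ∫ x in Set.Icc a b, f x = ∑ i ∈ Finset.range N, ∫ x in (p i)..(p (i+1)), f x := by
    rw [MeasureTheory.integral_Icc_eq_integral_Ioc,
      ← intervalIntegral.integral_of_le hab.le,
      intervalIntegral.sum_integral_adjacent_intervals (fun i _ => hint i), hp0, hpN]
  -- per-cell bound
  have hcell : ∀ i, i < N → ∫ x in (p i)..(p (i+1)), f x
      ≤ h * (eVariationOn v (Set.Icc (p (i - k)) (p (min N (i + 1 + k))))).toReal := by
    intro i hi
    have hple : p i ≤ p (i + 1) := hpmono (Nat.le_succ i)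
    have := intervalIntegral.integral_mono_on (μ := volume) hple (hint i)
      (intervalIntegrable_const) (hptwise i hi)
    rw [intervalIntegral.integral_const] at this
    have hlen : p (i + 1) - p i = h := by simp only [hpdef]; push_cast; ring
    rw [hlen] at this
    simpa [smul_eq_mul] using this
  -- counting bound in ℝ≥0∞
  have hcount : ∑ i ∈ Finset.range N,
      eVariationOn v (Set.Icc (p (i - k)) (p (min N (i + 1 + k))))
      ≤ (2 * k + 1) * eVariationOn v (Set.Icc a b) := by
    have hEq : ∀ i ∈ Finset.range N,
        eVariationOn v (Set.Icc (p (i - k)) (p (min N (i + 1 + k))))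
          = ∑ j ∈ Finset.Ico (i - k) (min N (i + 1 + k)), V j := by
      intro i hi
      have hi' : i < N := Finset.mem_range.1 hi
      exact var_cells hpmono (le_trans (Nat.sub_le i k)
        (le_min (Nat.le_of_lt hi') (by omega)))
    rw [Finset.sum_congr rfl hEq]
    have hsub : ∀ i, Finset.Ico (i - k) (min N (i + 1 + k)) ⊆ Finset.range N := by
      intro i j hj
      rw [Finset.mem_Ico] at hj
      rw [Finset.mem_range]
      omega
    calc ∑ i ∈ Finset.range N, ∑ j ∈ Finset.Ico (i - k) (min N (i + 1 + k)), V j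
        = ∑ i ∈ Finset.range N, ∑ j ∈ Finset.range N,
            if j ∈ Finset.Ico (i - k) (min N (i + 1 + k)) then V j else 0 := by
          refine Finset.sum_congr rfl fun i _ => ?_
          rw [Finset.sum_ite_mem, Finset.inter_eq_right.2 (hsub i)]
      _ = ∑ j ∈ Finset.range N, ∑ i ∈ Finset.range N,
            if j ∈ Finset.Ico (i - k) (min N (i + 1 + k)) then V j else 0 :=
          Finset.sum_comm
      _ ≤ ∑ j ∈ Finset.range N, (2 * k + 1) * V j := by
          refine Finset.sum_le_sum fun j _ => ?_
          rw [Finset.sum_ite, Finset.sum_const_zero, add_zero, Finset.sum_const]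
          have hcard : (Finset.filter
              (fun i => j ∈ Finset.Ico (i - k) (min N (i + 1 + k))) (Finset.range N)).card
              ≤ 2 * k + 1 := by
            have : (Finset.filter
                (fun i => j ∈ Finset.Ico (i - k) (min N (i + 1 + k))) (Finset.range N))
                ⊆ Finset.Icc (j - k) (j + k) := by
              intro i hi
              simp only [Finset.mem_filter, Finset.mem_Ico, Finset.mem_range] at hi
              rw [Finset.mem_Icc]
              omega
            calc _ ≤ (Finset.Icc (j - k) (j + k)).card := Finset.card_le_card this
              _ ≤ 2 * k + 1 := by rw [Nat.card_Icc]; omega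
          calc (Finset.filter _ (Finset.range N)).card • V j
              ≤ (2 * k + 1) • V j := smul_le_smul_of_nonneg_right (by exact_mod_cast hcard) zero_le
            _ = (2 * k + 1) * V j := by rw [nsmul_eq_mul]; push_cast; ring
      _ = (2 * k + 1) * eVariationOn v (Set.Icc a b) := by
          rw [← Finset.mul_sum, hVtot]
  -- put it together
  have hsum : ∫ x in Set.Icc a b, f x ≤ h * ((2 * k + 1) * M) := by
    rw [hsplit]
    calc ∑ i ∈ Finset.range N, ∫ x in (p i)..(p (i+1)), f x
        ≤ ∑ i ∈ Finset.range N,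
            h * (eVariationOn v (Set.Icc (p (i - k)) (p (min N (i + 1 + k))))).toReal :=
          Finset.sum_le_sum fun i hi => hcell i (Finset.mem_range.1 hi)
      _ = h * ∑ i ∈ Finset.range N,
            (eVariationOn v (Set.Icc (p (i - k)) (p (min N (i + 1 + k))))).toReal := by
          rw [Finset.mul_sum]
      _ ≤ h * ((2 * k + 1) * M) := by
          apply mul_le_mul_of_nonneg_left _ hh0.le
          have hfin : ∀ i ∈ Finset.range N,
              eVariationOn v (Set.Icc (p (i - k)) (p (min N (i + 1 + k)))) ≠ ⊤ := by
            intro i hi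
            refine ne_top_of_le_ne_top hBV (eVariationOn.mono v ?_)
            exact Set.Icc_subset_Icc (hpa _) (hpb _ (min_le_left _ _))
          rw [← ENNReal.toReal_sum hfin]
          have hRHS : ((2 * k + 1 : ℝ≥0∞) * eVariationOn v (Set.Icc a b)).toReal
              = (2 * k + 1) * M := by
            rw [ENNReal.toReal_mul, hM]
            congr 1
          rw [← hRHS]
          apply ENNReal.toReal_mono _ hcount
          refine ENNReal.mul_ne_top ?_ hBV
          exact ENNReal.add_ne_top.2 ⟨ENNReal.mul_ne_top (by simp) (ENNReal.natCast_ne_top k),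
            ENNReal.one_ne_top⟩
  have h2 : ∫ x in Set.Icc a b, f x ≤ 3 * κ * M :=
    hsum.trans (by nlinarith [hkh, hM0])
  calc (1 / κ) * ∫ x in Set.Icc a b, f x ≤ (1 / κ) * (3 * κ * M) :=
        mul_le_mul_of_nonneg_left h2 (by positivity)
    _ = 3 * M := by field_simp

end upper

section lower
variable {a b κ : ℝ} {v : ℝ → ℂ}

lemma piece_bound (hBV : eVariationOn v (Set.Icc a b) ≠ ⊤) (hκ : 0 < κ) {c d : ℝ}
    (hc : c ∈ Set.Icc a b) (hd : d ∈ Set.Icc a b) (hcd : c ≤ d) (hlen : d - c < κ) :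
    (d - c) * ‖v d - v c‖ ≤ ∫ x in c..d, osc v (Set.Ioo (x - κ) (x + κ) ∩ Set.Icc a b) := by
  have hpt : ∀ x ∈ Set.Icc c d,
      ‖v d - v c‖ ≤ osc v (Set.Ioo (x - κ) (x + κ) ∩ Set.Icc a b) := by
    intro x hx
    apply le_osc hBV Set.inter_subset_right
    · exact ⟨⟨by linarith [hx.1, hx.2], by linarith [hx.1, hx.2]⟩, hd⟩
    · exact ⟨⟨by linarith [hx.1, hx.2], by linarith [hx.1, hx.2]⟩, hc⟩
  have := intervalIntegral.integral_mono_on (μ := volume) hcd intervalIntegrable_const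
    (window_intervalIntegrable hBV hκ c d) hpt
  rw [intervalIntegral.integral_const, smul_eq_mul] at this
  exact this

lemma gap_est (hBV : eVariationOn v (Set.Icc a b) ≠ ⊤) (hκ : 0 < κ) {c d : ℝ}
    (hc : c ∈ Set.Icc a b) (hd : d ∈ Set.Icc a b) (hcd : c ≤ d)
    (hgap : d = c ∨ κ ≤ d - c) :
    (κ / 2) * ‖v d - v c‖ ≤ ∫ x in c..d, osc v (Set.Ioo (x - κ) (x + κ) ∩ Set.Icc a b) := by
  rcases hgap with rfl | hgap
  · simp
  set f : ℝ → ℝ := fun x => osc v (Set.Ioo (x - κ) (x + κ) ∩ Set.Icc a b) with hfdef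
  set g : ℝ := d - c with hgdef
  have hg0 : 0 < g := lt_of_lt_of_le hκ hgap
  set m : ℕ := ⌊2 * g / κ⌋₊ with hmdef
  have hm2 : (2:ℝ) ≤ 2 * g / κ := by rw [le_div_iff₀ hκ]; linarith
  have hm1 : 1 ≤ m := Nat.le_floor (by push_cast; linarith)
  have hmR : (0:ℝ) < m := by exact_mod_cast hm1
  have hmle : (m:ℝ) ≤ 2 * g / κ := Nat.floor_le (by positivity)
  have hmgt : g / κ < m := by
    have h1 : 2 * g / κ < (m:ℝ) + 1 := by rw [hmdef]; exact Nat.lt_floor_add_one _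
    have h2 : (1:ℝ) ≤ g / κ := by rw [le_div_iff₀ hκ]; linarith
    have h3 : 2 * g / κ = 2 * (g / κ) := by ring
    linarith
  set δ : ℝ := g / m with hδdef
  have hδ0 : 0 < δ := div_pos hg0 hmR
  have hδκ : δ < κ := by
    rw [hδdef, div_lt_iff₀ hmR]
    rw [div_lt_iff₀ hκ] at hmgt
    linarith
  have hδ2 : κ / 2 ≤ δ := by
    rw [hδdef, le_div_iff₀ hmR]
    rw [le_div_iff₀ hκ] at hmle
    linarith
  set r : ℕ → ℝ := fun t => c + t * δ with hrdef
  have hr0 : r 0 = c := by simp [hrdef]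
  have hrm : r m = d := by
    simp only [hrdef, hδdef]
    field_simp
    rw [hgdef]; ring
  have hrmono : Monotone r := by
    intro i j hij
    simp only [hrdef, add_le_add_iff_left]
    exact mul_le_mul_of_nonneg_right (Nat.cast_le.2 hij) hδ0.le
  have hrab : ∀ t, t ≤ m → r t ∈ Set.Icc a b := by
    intro t ht
    constructor
    · exact le_trans hc.1 (hr0 ▸ hrmono (Nat.zero_le t))
    · exact le_trans (hrm ▸ hrmono ht) hd.2
  have hsplit : ∫ x in c..d, f x = ∑ t ∈ Finset.range m, ∫ x in (r t)..(r (t+1)), f x := by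
    rw [intervalIntegral.sum_integral_adjacent_intervals
      (fun t _ => window_intervalIntegrable hBV hκ _ _), hr0, hrm]
  rw [hsplit]
  have hterm : ∀ t, t < m → (κ / 2) * ‖v (r (t+1)) - v (r t)‖
      ≤ ∫ x in (r t)..(r (t+1)), f x := by
    intro t ht
    have hlen : r (t+1) - r t = δ := by simp only [hrdef]; push_cast; ring
    have := piece_bound hBV hκ (hrab t ht.le) (hrab (t+1) ht)
      (hrmono (Nat.le_succ t)) (by rw [hlen]; exact hδκ)
    rw [hlen] at this
    exact le_trans (mul_le_mul_of_nonneg_right hδ2 (norm_nonneg _)) this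
  calc (κ / 2) * ‖v d - v c‖
      ≤ (κ / 2) * ∑ t ∈ Finset.range m, ‖v (r (t+1)) - v (r t)‖ := by
        apply mul_le_mul_of_nonneg_left _ (by positivity)
        have := dist_le_range_sum_dist (fun t => v (r t)) m
        rw [hr0, hrm] at this
        simp only [dist_eq_norm] at this ⊢
        calc ‖v d - v c‖ = ‖v c - v d‖ := by rw [norm_sub_rev]
          _ ≤ ∑ t ∈ Finset.range m, ‖v (r t) - v (r (t+1))‖ := by
              convert this using 2 with t
              all_goals rw [hr0] <;> rw [hrm]
          _ = ∑ t ∈ Finset.range m, ‖v (r (t+1)) - v (r t)‖ := by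
              refine Finset.sum_congr rfl fun t _ => (norm_sub_rev _ _)
    _ = ∑ t ∈ Finset.range m, (κ / 2) * ‖v (r (t+1)) - v (r t)‖ := Finset.mul_sum _ _ _
    _ ≤ ∑ t ∈ Finset.range m, ∫ x in (r t)..(r (t+1)), f x :=
        Finset.sum_le_sum fun t ht => hterm t (Finset.mem_range.1 ht)

end lower

lemma exists_partition {v : ℝ → ℂ} {s : Set ℝ} {c : ℝ≥0∞} (hlt : c < eVariationOn v s) :
    ∃ (n : ℕ) (u : ℕ → ℝ), Monotone u ∧ (∀ i, u i ∈ s) ∧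
      c < ∑ i ∈ Finset.range n, edist (v (u (i + 1))) (v (u i)) := by
  unfold eVariationOn at hlt
  obtain ⟨⟨n, u, hu, us⟩, h⟩ := lt_iSup_iff.1 hlt
  exact ⟨n, u, hu, us, h⟩

/-- Keller's generalized BV seminorm
`𝔳𝔞𝔯_Y v = sup_{0<κ<1} κ⁻¹ ∫_Y Osc(v, B_κ(x)) dLeb(x)`, where `B_κ(x) = (x−κ,x+κ) ∩ Y`. -/
noncomputable def kellerVar (v : ℝ → ℂ) (Y : Set ℝ) : ℝ :=
  ⨆ κ : Set.Ioo (0 : ℝ) 1,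
    (1 / κ.1) * ∫ x in Y, osc v (Set.Ioo (x - κ.1) (x + κ.1) ∩ Y)

/-- Equivalence of BV seminorms in dimension one:
`(1/2) Var_Y v ≤ 𝔳𝔞𝔯_Y v ≤ 3 Var_Y v`. -/
theorem stmt7 (a b : ℝ) (v : ℝ → ℂ)
    (hBV : eVariationOn v (Set.Icc a b) ≠ ⊤) :
    (1 / 2) * (eVariationOn v (Set.Icc a b)).toReal ≤ kellerVar v (Set.Icc a b) ∧
      kellerVar v (Set.Icc a b) ≤ 3 * (eVariationOn v (Set.Icc a b)).toReal := by
  set M := (eVariationOn v (Set.Icc a b)).toReal with hM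
  have hM0 : 0 ≤ M := ENNReal.toReal_nonneg
  set T : Set.Ioo (0:ℝ) 1 → ℝ := fun κ =>
    (1 / κ.1) * ∫ x in Set.Icc a b, osc v (Set.Ioo (x - κ.1) (x + κ.1) ∩ Set.Icc a b) with hT
  have hkv : kellerVar v (Set.Icc a b) = ⨆ κ, T κ := rfl
  have hub : ∀ κ : Set.Ioo (0:ℝ) 1, T κ ≤ 3 * M := fun κ => upper_bound hBV κ.2.1
  have hbdd : BddAbove (Set.range T) := ⟨3 * M, by rintro _ ⟨κ, rfl⟩; exact hub κ⟩
  have hmem : (1/2 : ℝ) ∈ Set.Ioo (0:ℝ) 1 := by norm_num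
  have hTnonneg : ∀ κ : Set.Ioo (0:ℝ) 1, 0 ≤ T κ := by
    intro κ
    apply mul_nonneg (one_div_nonneg.2 κ.2.1.le)
    exact setIntegral_nonneg measurableSet_Icc fun x _ => osc_nonneg _
  haveI : Nonempty (Set.Ioo (0:ℝ) 1) := ⟨⟨1/2, hmem⟩⟩
  have hK0 : 0 ≤ kellerVar v (Set.Icc a b) := by
    rw [hkv]
    exact le_trans (hTnonneg ⟨1/2, hmem⟩) (le_ciSup hbdd _)
  refine ⟨?_, hkv ▸ ciSup_le hub⟩
  -- lower bound
  by_contra hcon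
  push_neg at hcon
  set ε : ℝ := (1/2 * M - kellerVar v (Set.Icc a b)) / 2 with hε
  have hε0 : 0 < ε := by
    rw [hε]; linarith
  suffices hfa : 1/2 * M ≤ kellerVar v (Set.Icc a b) + ε by
    rw [hε] at hfa; linarith
  by_cases hMε : M ≤ ε
  · linarith
  push_neg at hMε
  -- extract a partition
  have hlt : ENNReal.ofReal (M - ε) < eVariationOn v (Set.Icc a b) := by
    rw [ENNReal.ofReal_lt_iff_lt_toReal (by linarith) hBV, ← hM]
    linarith
  obtain ⟨n, u, hu, us, hsum⟩ := exists_partition hlt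
  have hsum_ne : ∑ i ∈ Finset.range n, edist (v (u (i + 1))) (v (u i)) ≠ ⊤ :=
    ne_top_of_le_ne_top hBV (eVariationOn.sum_le (f := v) (n := n) hu us)
  have hsum_real : M - ε < ∑ i ∈ Finset.range n, ‖v (u (i + 1)) - v (u i)‖ := by
    have h1 := (ENNReal.toReal_lt_toReal ENNReal.ofReal_ne_top hsum_ne).2 hsum
    rw [ENNReal.toReal_ofReal (by linarith)] at h1
    rw [ENNReal.toReal_sum (fun i _ => edist_ne_top _ _)] at h1
    have h2 : ∀ i ∈ Finset.range n,
        (edist (v (u (i+1))) (v (u i))).toReal = ‖v (u (i + 1)) - v (u i)‖ := fun i _ => by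
      rw [edist_dist, ENNReal.toReal_ofReal dist_nonneg, dist_eq_norm]
    rw [Finset.sum_congr rfl h2] at h1
    exact h1
  -- the minimal positive gap
  set S : Finset ℕ := (Finset.range n).filter (fun i => u i < u (i + 1)) with hS
  have hSne : S.Nonempty := by
    by_contra hSe
    rw [Finset.not_nonempty_iff_eq_empty] at hSe
    have hzero : ∀ i ∈ Finset.range n, ‖v (u (i + 1)) - v (u i)‖ = 0 := by
      intro i hi
      have : ¬ u i < u (i + 1) := by
        intro hlt'
        have : i ∈ S := by rw [hS, Finset.mem_filter]; exact ⟨hi, hlt'⟩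
        simp [hSe] at this
      have : u (i + 1) = u i := le_antisymm (not_lt.1 this) (hu (Nat.le_succ i))
      rw [this]; simp
    rw [Finset.sum_congr rfl hzero, Finset.sum_const_zero] at hsum_real
    linarith
  set κ : ℝ := min (1/2) (S.inf' hSne (fun i => u (i + 1) - u i)) with hκ
  have hκ0 : 0 < κ := by
    rw [hκ, lt_min_iff]
    refine ⟨by norm_num, ?_⟩
    rw [Finset.lt_inf'_iff]
    intro i hi
    rw [hS, Finset.mem_filter] at hi
    linarith [hi.2]
  have hκ1 : κ < 1 := lt_of_le_of_lt (min_le_left _ _) (by norm_num)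
  have hκgap : ∀ i ∈ Finset.range n, u i < u (i + 1) → κ ≤ u (i + 1) - u i := by
    intro i hi hlt'
    refine le_trans (min_le_right _ _) (Finset.inf'_le _ ?_)
    rw [hS, Finset.mem_filter]; exact ⟨hi, hlt'⟩
  -- main chain
  set f : ℝ → ℝ := fun x => osc v (Set.Ioo (x - κ) (x + κ) ∩ Set.Icc a b) with hf
  have hchain : (κ/2) * (M - ε) ≤ ∫ x in Set.Icc a b, f x := by
    have h0n : u 0 ≤ u n := hu (Nat.zero_le n)
    have hsub : Set.Icc (u 0) (u n) ⊆ Set.Icc a b := Set.Icc_subset_Icc (us 0).1 (us n).2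
    have step1 : ∫ x in Set.Icc (u 0) (u n), f x ≤ ∫ x in Set.Icc a b, f x := by
      apply setIntegral_mono_set (window_integrableOn hBV hκ0 a b)
      · exact Filter.Eventually.of_forall fun x => osc_nonneg _
      · exact Filter.Eventually.of_forall hsub
    have step2 : ∫ x in Set.Icc (u 0) (u n), f x
        = ∑ j ∈ Finset.range n, ∫ x in (u j)..(u (j+1)), f x := by
      rw [MeasureTheory.integral_Icc_eq_integral_Ioc,
        ← intervalIntegral.integral_of_le h0n,
        intervalIntegral.sum_integral_adjacent_intervals
          (fun j _ => window_intervalIntegrable hBV hκ0 _ _)]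
    have step3 : ∑ j ∈ Finset.range n, (κ/2) * ‖v (u (j + 1)) - v (u j)‖
        ≤ ∑ j ∈ Finset.range n, ∫ x in (u j)..(u (j+1)), f x := by
      refine Finset.sum_le_sum fun j hj => ?_
      refine gap_est hBV hκ0 (us j) (us (j+1)) (hu (Nat.le_succ j)) ?_
      rcases eq_or_lt_of_le (hu (Nat.le_succ j)) with heq | hlt'
      · exact Or.inl heq.symm
      · exact Or.inr (hκgap j hj hlt')
    calc (κ/2) * (M - ε)
        ≤ (κ/2) * ∑ i ∈ Finset.range n, ‖v (u (i + 1)) - v (u i)‖ :=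
          mul_le_mul_of_nonneg_left hsum_real.le (by positivity)
      _ = ∑ j ∈ Finset.range n, (κ/2) * ‖v (u (j + 1)) - v (u j)‖ := Finset.mul_sum _ _ _
      _ ≤ ∑ j ∈ Finset.range n, ∫ x in (u j)..(u (j+1)), f x := step3
      _ = ∫ x in Set.Icc (u 0) (u n), f x := step2.symm
      _ ≤ ∫ x in Set.Icc a b, f x := step1
  have hTκ : (1/2) * (M - ε) ≤ T ⟨κ, hκ0, hκ1⟩ := by
    have : T ⟨κ, hκ0, hκ1⟩ = (1/κ) * ∫ x in Set.Icc a b, f x := rfl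
    rw [this]
    calc (1/2) * (M - ε) = (1/κ) * ((κ/2) * (M - ε)) := by field_simp
      _ ≤ (1/κ) * ∫ x in Set.Icc a b, f x :=
          mul_le_mul_of_nonneg_left hchain (by positivity)
  have hle : (1/2) * (M - ε) ≤ kellerVar v (Set.Icc a b) := by
    rw [hkv]
    exact le_trans hTκ (le_ciSup hbdd _)
  linarith
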